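/- Let C4 = ⟨t⟩ be the cyclic group of order 4, let M₂ be the ℤ[C4]-module ℤ² with t acting by t·x = −y, t·y = x on the standard basis x, y, and let P = ℤ[C4] ⊗_{ℤ[C2]} ℤ be the permutation module on the cosets of the order-2 subgroup C2 ⊂ C4. Then there is an isomorphism of ℤ[C4]-modules M₂ ⊗_ℤ M₂ ≅ P ⊕ P, where C4 acts diagonally on the tensor product. -/

import Mathlib

/-- A monoid hom out of `Multiplicative (ZMod n)` determined by an element `g` with `g ^ n = 1`. -/
def zmodPowHom {G : Type*} [Monoid G] (n : ℕ) [NeZero n] (g : G) (h : g ^ n = 1) :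
    Multiplicative (ZMod n) →* G where
  toFun x := g ^ (Multiplicative.toAdd x).val
  map_one' := by
    show g ^ (0 : ZMod n).val = 1
    simp [ZMod.val_zero]
  map_mul' x y := by
    have key : ∀ m : ℕ, g ^ (m % n) = g ^ m := fun m => by
      conv_rhs => rw [← Nat.div_add_mod m n]
      rw [pow_add, pow_mul, h, one_pow, one_mul]
    show g ^ ((Multiplicative.toAdd x) + (Multiplicative.toAdd y)).val = _
    rw [ZMod.val_add, key, pow_add]

/-- The cyclic group of order 4, written multiplicatively. -/
abbrev C4 : Type := Multiplicative (ZMod 4)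

/-- The rank-two `ℤ[C4]`-lattice `M₂ = ℤ²`: the generator `t` acts on the standard basis
`x = e₀`, `y = e₁` by `t·x = -y`, `t·y = x`. -/
noncomputable def M2rep : Representation ℤ C4 (Fin 2 → ℤ) :=
  zmodPowHom 4 (Matrix.toLinAlgEquiv' !![0, 1; -1, 0])
    (by
      rw [← map_pow, ← map_one (Matrix.toLinAlgEquiv' (n := Fin 2) (R := ℤ))]
      norm_num [pow_succ, Matrix.mul_fin_two]
      exact congrArg _ Matrix.one_fin_two.symm)

/-- The subgroup of order 2 in `C4`. -/
def C2inC4 : Subgroup C4 := Subgroup.zpowers (Multiplicative.ofAdd (2 : ZMod 4))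

/-- The permutation `ℤ[C4]`-module `P = ℤ[C4] ⊗_{ℤ[C2]} ℤ` on the cosets `C4 ⧸ C2`. -/
noncomputable def Prep : Representation ℤ C4 ((C4 ⧸ C2inC4) →₀ ℤ) :=
  { toFun := fun g => Finsupp.lmapDomain ℤ ℤ (g • ·)
    map_one' := by ext; simp
    map_mul' := fun x y => by ext; simp [mul_smul] }


noncomputable def asModuleLEquiv {k G V W : Type*} [CommSemiring k] [Monoid G]
    [AddCommMonoid V] [Module k V] [AddCommMonoid W] [Module k W]
    (ρ : Representation k G V) (τ : Representation k G W)
    (e : V ≃ₗ[k] W) (h : ∀ g v, e (ρ g v) = τ g (e v)) :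
    ρ.asModule ≃ₗ[MonoidAlgebra k G] τ.asModule where
  toFun v := e v
  invFun w := e.symm w
  left_inv v := e.symm_apply_apply v
  right_inv w := e.apply_symm_apply w
  map_add' x y := e.map_add x y
  map_smul' r v := by
    show e (ρ.asAlgebraHom r v) = τ.asAlgebraHom r (e v)
    obtain ⟨v, rfl⟩ : ∃ w : V, w = v := ⟨v, rfl⟩
    induction r using MonoidAlgebra.induction_linear with
    | zero => simp
    | add a b ha hb => simp [ha, hb]
    | single g c =>
      simp only [Representation.asAlgebraHom_single, LinearMap.smul_apply, map_smul]
      exact congrArg _ (h g v)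


/-- Product of two representations. -/
noncomputable def repProd {k G V W : Type*} [CommSemiring k] [Monoid G]
    [AddCommMonoid V] [Module k V] [AddCommMonoid W] [Module k W]
    (ρ : Representation k G V) (τ : Representation k G W) :
    Representation k G (V × W) where
  toFun g := (ρ g).prodMap (τ g)
  map_one' := by ext x <;> simp
  map_mul' g g' := by ext x <;> simp

noncomputable def repProdAsModuleEquiv {k G V W : Type*} [CommSemiring k] [Monoid G]
    [AddCommMonoid V] [Module k V] [AddCommMonoid W] [Module k W]
    (ρ : Representation k G V) (τ : Representation k G W) :
    (repProd ρ τ).asModule ≃ₗ[MonoidAlgebra k G] ρ.asModule × τ.asModule where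
  toFun v := v
  invFun w := w
  left_inv _ := rfl
  right_inv _ := rfl
  map_add' _ _ := rfl
  map_smul' r v := by
    show (repProd ρ τ).asAlgebraHom r v = (ρ.asAlgebraHom r v.1, τ.asAlgebraHom r v.2)
    obtain ⟨v, rfl⟩ : ∃ w : V × W, w = v := ⟨v, rfl⟩
    induction r using MonoidAlgebra.induction_linear with
    | zero => simp; rfl
    | add a b ha hb => simp only [map_add, LinearMap.add_apply, ha, hb, Prod.fst_add, Prod.snd_add, Prod.mk_add_mk]
    | single g c => simp [repProd, Prod.ext_iff]

def phi : C4 →* Multiplicative (ZMod 2) :=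
  zmodPowHom 4 (Multiplicative.ofAdd (1 : ZMod 2)) (by decide)

lemma phi_surj : Function.Surjective phi := by decide

lemma mem_ker_phi : ∀ x : C4, x ∈ phi.ker ↔ x = 1 ∨ x = Multiplicative.ofAdd (2 : ZMod 4) := by
  decide

lemma ker_phi : phi.ker = C2inC4 := by
  ext x
  have hx : x ∈ C2inC4 ↔ x = 1 ∨ x = Multiplicative.ofAdd (2 : ZMod 4) := by
    constructor
    · rintro ⟨k, rfl⟩
      have : ∀ a : ZMod 4, a * 2 = 0 ∨ a * 2 = 2 := by decide
      rcases this (k : ZMod 4) with h | h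
      · left
        show Multiplicative.ofAdd (k • (2 : ZMod 4)) = 1
        rw [zsmul_eq_mul, h]; rfl
      · right
        show Multiplicative.ofAdd (k • (2 : ZMod 4)) = _
        rw [zsmul_eq_mul, h]
    · rintro (rfl | rfl)
      · exact ⟨0, rfl⟩
      · exact ⟨1, by simp⟩
  rw [hx, mem_ker_phi]

instance : C2inC4.Normal := Subgroup.normal_of_comm _

noncomputable def psi : (C4 ⧸ C2inC4) ≃* Multiplicative (ZMod 2) :=
  (QuotientGroup.quotientMulEquivOfEq ker_phi.symm).trans
    (QuotientGroup.quotientKerEquivOfSurjective phi phi_surj)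

lemma psi_mk (x : C4) : psi (QuotientGroup.mk x) = phi x := rfl

noncomputable def BQ : Module.Basis (Multiplicative (ZMod 2)) ℤ ((C4 ⧸ C2inC4) →₀ ℤ) :=
  (Finsupp.basisSingleOne).reindex psi.toEquiv

notation "i1" => Multiplicative.ofAdd (1 : ZMod 2)
notation "t4" => Multiplicative.ofAdd (1 : ZMod 4)

lemma Prep_t_BQ (i : Multiplicative (ZMod 2)) : Prep t4 (BQ i) = BQ (i1 * i) := by
  obtain ⟨x, hx⟩ := QuotientGroup.mk_surjective (psi.symm i)
  have h1 : BQ i = Finsupp.single (psi.symm i) 1 := by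
    simp [BQ, Module.Basis.reindex_apply, Finsupp.basisSingleOne]
  have h2 : BQ (i1 * i) = Finsupp.single (psi.symm (i1 * i)) 1 := by
    simp [BQ, Module.Basis.reindex_apply, Finsupp.basisSingleOne]
  rw [h1, h2]
  show Finsupp.lmapDomain ℤ ℤ (t4 • ·) _ = _
  rw [Finsupp.lmapDomain_apply, Finsupp.mapDomain_single]
  congr 1
  apply psi.injective
  rw [MulEquiv.apply_symm_apply, ← hx, MulAction.Quotient.smul_mk, psi_mk]
  have hphix : phi x = i := by rw [← psi_mk, hx, MulEquiv.apply_symm_apply]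
  show phi (t4 * x) = i1 * i
  rw [map_mul, hphix]
  rfl

lemma M2_t_apply (v : Fin 2 → ℤ) :
    M2rep t4 v = Matrix.toLin' !![0, 1; -1, 0] v := by
  show ((Matrix.toLinAlgEquiv' !![0, 1; -1, 0]) ^ (1 : ZMod 4).val) v = _
  have h1 : (1 : ZMod 4).val = 1 := rfl
  rw [h1, pow_one]
  rfl

lemma M2_t_e0 : M2rep t4 (Pi.single (0 : Fin 2) (1 : ℤ)) = -(Pi.single (1 : Fin 2) (1 : ℤ)) := by
  rw [M2_t_apply]
  funext i
  fin_cases i <;>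
    simp [Matrix.toLin'_apply, Matrix.mulVec, dotProduct, Fin.sum_univ_two, Pi.basisFun_apply]

lemma M2_t_e1 : M2rep t4 (Pi.single (1 : Fin 2) (1 : ℤ)) = Pi.single (0 : Fin 2) (1 : ℤ) := by
  rw [M2_t_apply]
  funext i
  fin_cases i <;>
    simp [Matrix.toLin'_apply, Matrix.mulVec, dotProduct, Fin.sum_univ_two, Pi.basisFun_apply]

open scoped TensorProduct

noncomputable def BW : Module.Basis (Multiplicative (ZMod 2) ⊕ Multiplicative (ZMod 2)) ℤ
    (((C4 ⧸ C2inC4) →₀ ℤ) × ((C4 ⧸ C2inC4) →₀ ℤ)) := BQ.prod BQ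

noncomputable def BT : Module.Basis (Fin 2 × Fin 2) ℤ ((Fin 2 → ℤ) ⊗[ℤ] (Fin 2 → ℤ)) :=
  Module.Basis.tensorProduct (Pi.basisFun ℤ (Fin 2)) (Pi.basisFun ℤ (Fin 2))

noncomputable def ffun : Fin 2 × Fin 2 →
    (((C4 ⧸ C2inC4) →₀ ℤ) × ((C4 ⧸ C2inC4) →₀ ℤ)) := fun p =>
  ![![BW (.inl 1), BW (.inr 1)], ![-BW (.inr i1), BW (.inl i1)]] p.1 p.2

noncomputable def gfun : (Multiplicative (ZMod 2) ⊕ Multiplicative (ZMod 2)) →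
    ((Fin 2 → ℤ) ⊗[ℤ] (Fin 2 → ℤ)) :=
  Sum.elim (fun i => if i = 1 then BT (0, 0) else BT (1, 1))
    (fun i => if i = 1 then BT (0, 1) else -BT (1, 0))

noncomputable def fmap : ((Fin 2 → ℤ) ⊗[ℤ] (Fin 2 → ℤ)) →ₗ[ℤ]
    (((C4 ⧸ C2inC4) →₀ ℤ) × ((C4 ⧸ C2inC4) →₀ ℤ)) := BT.constr ℤ ffun

noncomputable def gmap : (((C4 ⧸ C2inC4) →₀ ℤ) × ((C4 ⧸ C2inC4) →₀ ℤ)) →ₗ[ℤ]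
    ((Fin 2 → ℤ) ⊗[ℤ] (Fin 2 → ℤ)) := BW.constr ℤ gfun

lemma fmap_BT (p : Fin 2 × Fin 2) : fmap (BT p) = ffun p := BT.constr_basis ℤ ffun p

lemma gmap_BW (s : Multiplicative (ZMod 2) ⊕ Multiplicative (ZMod 2)) :
    gmap (BW s) = gfun s := BW.constr_basis ℤ gfun s

lemma two_cases : ∀ i : Multiplicative (ZMod 2), i = 1 ∨ i = i1 := by decide

lemma i1_ne_one : i1 ≠ (1 : Multiplicative (ZMod 2)) := by decide

lemma gf : gmap ∘ₗ fmap = LinearMap.id := by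
  apply BT.ext
  intro p
  rw [LinearMap.comp_apply, LinearMap.id_apply, fmap_BT]
  fin_cases p <;>
    simp [ffun, gmap_BW, gfun, i1_ne_one]

lemma fg : fmap ∘ₗ gmap = LinearMap.id := by
  apply BW.ext
  intro s
  rw [LinearMap.comp_apply, LinearMap.id_apply, gmap_BW]
  rcases s with i | i <;> rcases two_cases i with rfl | rfl <;>
    simp [gfun, fmap_BT, ffun, i1_ne_one]

noncomputable def eqv : ((Fin 2 → ℤ) ⊗[ℤ] (Fin 2 → ℤ)) ≃ₗ[ℤ]
    (((C4 ⧸ C2inC4) →₀ ℤ) × ((C4 ⧸ C2inC4) →₀ ℤ)) :=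
  LinearEquiv.ofLinear fmap gmap fg gf

/-- Equivariance at the generator implies equivariance everywhere for `C4`. -/
lemma equivariance_of_gen {V W : Type*} [AddCommMonoid V] [Module ℤ V]
    [AddCommMonoid W] [Module ℤ W]
    (ρ : Representation ℤ C4 V) (τ : Representation ℤ C4 W) (f : V →ₗ[ℤ] W)
    (h : ∀ v, f (ρ t4 v) = τ t4 (f v)) :
    ∀ g v, f (ρ g v) = τ g (f v) := by
  have key : ∀ (n : ℕ) (v : V), f ((ρ t4 ^ n) v) = (τ t4 ^ n) (f v) := by
    intro n
    induction n with
    | zero => intro v; simp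
    | succ n ih =>
      intro v
      rw [pow_succ, Module.End.mul_apply, ih, h, pow_succ, Module.End.mul_apply]
  intro g v
  have hg : g = t4 ^ (Multiplicative.toAdd g).val := by
    apply Multiplicative.toAdd.injective
    rw [toAdd_pow, toAdd_ofAdd, nsmul_eq_mul, mul_one, ZMod.natCast_val, ZMod.cast_id]
  rw [hg, map_pow, map_pow]
  exact key _ v

lemma BW_inl (i : Multiplicative (ZMod 2)) : BW (.inl i) = (BQ i, 0) :=
  Prod.ext (BQ.prod_apply_inl_fst BQ i) (BQ.prod_apply_inl_snd BQ i)

lemma BW_inr (i : Multiplicative (ZMod 2)) : BW (.inr i) = (0, BQ i) :=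
  Prod.ext (BQ.prod_apply_inr_fst BQ i) (BQ.prod_apply_inr_snd BQ i)

lemma fmap_tmul (i j : Fin 2) :
    fmap (Pi.single i (1 : ℤ) ⊗ₜ[ℤ] Pi.single j (1 : ℤ)) = ffun (i, j) := by
  rw [show (Pi.single i (1 : ℤ)) = Pi.basisFun ℤ (Fin 2) i from (Pi.basisFun_apply ℤ (Fin 2) i).symm,
    show (Pi.single j (1 : ℤ)) = Pi.basisFun ℤ (Fin 2) j from (Pi.basisFun_apply ℤ (Fin 2) j).symm,
    ← Module.Basis.tensorProduct_apply]
  exact fmap_BT (i, j)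

lemma i1_sq : i1 * i1 = (1 : Multiplicative (ZMod 2)) := by decide

lemma gen_equiv : ∀ g v, fmap ((M2rep.tprod M2rep) g v) = (repProd Prep Prep) g (fmap v) := by
  apply equivariance_of_gen
  suffices h : fmap ∘ₗ ((M2rep.tprod M2rep) t4) = ((repProd Prep Prep) t4) ∘ₗ fmap by
    intro v
    exact LinearMap.ext_iff.mp h v
  apply BT.ext
  rintro ⟨i, j⟩
  show fmap ((M2rep.tprod M2rep) t4 (BT (i, j))) = (repProd Prep Prep) t4 (fmap (BT (i, j)))
  rw [fmap_BT, Representation.tprod_apply,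
    show BT (i, j) = Pi.basisFun ℤ (Fin 2) i ⊗ₜ Pi.basisFun ℤ (Fin 2) j from
      Module.Basis.tensorProduct_apply _ _ i j, TensorProduct.map_tmul]
  fin_cases i <;> fin_cases j <;>
    simp [M2_t_e0, M2_t_e1, TensorProduct.neg_tmul, TensorProduct.tmul_neg, fmap_tmul, ffun,
      repProd, BW_inl, BW_inr, Prep_t_BQ, i1_sq]

theorem M2_tensor_M2_iso_P_sum_P' :
    Nonempty ((M2rep.tprod M2rep).asModule ≃ₗ[MonoidAlgebra ℤ C4]
      (Prep.asModule × Prep.asModule)) :=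
  ⟨(asModuleLEquiv (M2rep.tprod M2rep) (repProd Prep Prep) eqv
      (fun g v => by exact gen_equiv g v)).trans
    (repProdAsModuleEquiv Prep Prep)⟩

/-- there is an isomorphism of `ℤ[C4]`-modules `M₂ ⊗_ℤ M₂ ≅ P ⊕ P`, where `C4`
acts diagonally on the tensor product. -/
theorem M2_tensor_M2_iso_P_sum_P :
    Nonempty ((M2rep.tprod M2rep).asModule ≃ₗ[MonoidAlgebra ℤ C4]
      (Prep.asModule × Prep.asModule)) := by
  exact M2_tensor_M2_iso_P_sum_P'
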